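/- Let ℓ, r be real numbers with 0 < ℓ ≤ r and let w ≥ ℓ be a real number that is not achievable. Then w* := r·⌊w/r⌋ is achievable, w* < w, and every achievable real number v with v < w satisfies v ≤ w* = r·⌊w/r⌋. In other words, r·⌊w/r⌋ is the largest achievable point below w. -/

import Mathlib

/-- `w` is achievable for parameters `l ≤ r`: it is a sum of finitely many
(at least one) reals, each in `[l, r]`. -/
def Achievable (l r w : ℝ) : Prop :=
  ∃ q : ℕ, 0 < q ∧ ∃ s : Fin q → ℝ, (∀ i, l ≤ s i ∧ s i ≤ r) ∧ ∑ i, s i = w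

lemma achievable_iff (l r x : ℝ) :
    Achievable l r x ↔ ∃ q : ℕ, 0 < q ∧ (q : ℝ) * l ≤ x ∧ x ≤ (q : ℝ) * r := by
  constructor
  · rintro ⟨q, hq, s, hs, hsum⟩
    refine ⟨q, hq, ?_, ?_⟩
    · calc (q : ℝ) * l = ∑ _i : Fin q, l := by simp [mul_comm]
        _ ≤ ∑ i, s i := Finset.sum_le_sum fun i _ => (hs i).1
        _ = x := hsum
    · calc x = ∑ i, s i := hsum.symm
        _ ≤ ∑ _i : Fin q, r := Finset.sum_le_sum fun i _ => (hs i).2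
        _ = (q : ℝ) * r := by simp [mul_comm]
  · rintro ⟨q, hq, h1, h2⟩
    have hq' : (0 : ℝ) < q := by exact_mod_cast hq
    refine ⟨q, hq, fun _ => x / q, fun i => ⟨?_, ?_⟩, ?_⟩
    · rw [le_div_iff₀ hq']; linarith [h1]
    · rw [div_le_iff₀ hq']; linarith [h2]
    · rw [Finset.sum_const, Finset.card_univ, Fintype.card_fin, nsmul_eq_mul]
      field_simp

theorem largest_achievable_below (l r w : ℝ) (hl : 0 < l) (hlr : l ≤ r) (hw : l ≤ w)
    (hna : ¬ Achievable l r w) :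
    Achievable l r (r * (⌊w / r⌋ : ℝ)) ∧ r * (⌊w / r⌋ : ℝ) < w ∧
      ∀ v : ℝ, Achievable l r v → v < w → v ≤ r * (⌊w / r⌋ : ℝ) := by
  have hr : 0 < r := lt_of_lt_of_le hl hlr
  have hrw : r < w := by
    by_contra h
    push_neg at h
    exact hna ((achievable_iff l r w).2 ⟨1, one_pos, by simpa using hw, by simpa using h⟩)
  set k : ℤ := ⌊w / r⌋ with hk
  have hk1 : 1 ≤ k := by
    rw [hk, Int.le_floor]
    rw [le_div_iff₀ hr]
    push_cast; linarith
  have hkr : (k : ℝ) * r ≤ w := by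
    have := Int.floor_le (w / r)
    rw [← hk] at this
    calc (k : ℝ) * r ≤ (w / r) * r := by nlinarith
      _ = w := by field_simp
  have hkw : w < ((k : ℝ) + 1) * r := by
    have := Int.lt_floor_add_one (w / r)
    rw [← hk] at this
    calc w = (w / r) * r := by field_simp
      _ < ((k : ℝ) + 1) * r := by nlinarith
  -- achievability of k*r
  have hach : Achievable l r (r * (k : ℝ)) := by
    refine (achievable_iff l r _).2 ⟨k.toNat, ?_, ?_, ?_⟩
    · omega
    · have : ((k.toNat : ℤ) : ℝ) = (k : ℝ) := by exact_mod_cast Int.toNat_of_nonneg (by omega)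
      push_cast at this ⊢
      rw [this]
      nlinarith
    · have : ((k.toNat : ℤ) : ℝ) = (k : ℝ) := by exact_mod_cast Int.toNat_of_nonneg (by omega)
      push_cast at this ⊢
      rw [this]; ring_nf; linarith
  have hlt : r * (k : ℝ) < w := by
    rcases lt_or_eq_of_le hkr with h | h
    · linarith [h]
    · exfalso
      apply hna
      rw [← h, mul_comm]
      exact hach
  refine ⟨hach, hlt, ?_⟩
  -- w < (k+1) * l
  have hwl : w < ((k : ℝ) + 1) * l := by
    by_contra h
    push_neg at h
    apply hna
    refine (achievable_iff l r w).2 ⟨(k + 1).toNat, by omega, ?_, ?_⟩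
    all_goals
      have : (((k + 1).toNat : ℤ) : ℝ) = (k : ℝ) + 1 := by
        exact_mod_cast Int.toNat_of_nonneg (by omega)
      push_cast at this ⊢
      rw [this]
    · exact h
    · linarith
  intro v hv hvw
  obtain ⟨q, hq, h1, h2⟩ := (achievable_iff l r v).1 hv
  rcases le_or_gt (q : ℝ) (k : ℝ) with hle | hgt
  · calc v ≤ (q : ℝ) * r := h2
      _ ≤ (k : ℝ) * r := by nlinarith
      _ = r * (k : ℝ) := mul_comm _ _
  · have hq1 : (k : ℝ) + 1 ≤ (q : ℝ) := by
      have : k < (q : ℤ) := by exact_mod_cast hgt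
      exact_mod_cast this
    have : ((k : ℝ) + 1) * l ≤ v := le_trans (by nlinarith) h1
    linarith
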